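/- Let (f_n)_{n≥1} be a sequence of nonconstant holomorphic self-maps of the unit disk 𝔻 with f_n(0) = 0 for every n, and suppose the forward iterates F_n := f_n ∘ ⋯ ∘ f_1 converge locally uniformly on 𝔻 to a holomorphic self-map F of 𝔻. Then F is nonconstant if and only if Σ_{n≥1} (1 − |f_n′(0)|) < ∞. -/

import Mathlib

open Filter Metric Set Topology

set_option maxHeartbeats 1000000

noncomputable section

/-- The open unit disk in the complex plane. -/
def unitDisk : Set ℂ := Metric.ball (0 : ℂ) 1

/-- A holomorphic self-map of the unit disk. -/
def IsHolSelfMap (f : ℂ → ℂ) : Prop :=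
  DifferentiableOn ℂ f unitDisk ∧ Set.MapsTo f unitDisk unitDisk

/-- Compatibility: the complex absolute value as an `AbsoluteValue`, equal to the norm. -/
def Complex.abs : AbsoluteValue ℂ ℝ := IsAbsoluteValue.toAbsoluteValue (norm : ℂ → ℝ)

lemma Complex.norm_eq_abs (z : ℂ) : ‖z‖ = Complex.abs z := rfl

lemma Complex.abs_apply (z : ℂ) : Complex.abs z = Real.sqrt (Complex.normSq z) :=
  Complex.norm_def z

@[simp]
lemma Complex.abs_conj (z : ℂ) : Complex.abs ((starRingEnd ℂ) z) = Complex.abs z :=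
  Complex.norm_conj z

lemma Complex.abs_re_le_abs (z : ℂ) : |z.re| ≤ Complex.abs z := Complex.abs_re_le_norm z

lemma Complex.sq_abs (z : ℂ) : Complex.abs z ^ 2 = Complex.normSq z := Complex.sq_norm z

lemma Complex.abs_ofReal (r : ℝ) : Complex.abs (r : ℂ) = |r| := by
  rw [← Complex.norm_eq_abs, Complex.norm_real, Real.norm_eq_abs]

@[simp]
lemma Complex.abs_two : Complex.abs 2 = 2 := by
  show ‖(2 : ℂ)‖ = 2
  norm_num

lemma Complex.continuous_abs : Continuous Complex.abs := continuous_norm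

lemma mem_unitDisk {z : ℂ} : z ∈ unitDisk ↔ Complex.abs z < 1 := by
  simp [unitDisk, Complex.norm_eq_abs, mem_ball, dist_zero_right]

lemma zero_mem_unitDisk : (0 : ℂ) ∈ unitDisk := by simp [mem_unitDisk]

lemma normSq_identity (p q : ℂ) :
    Complex.normSq (1 - (starRingEnd ℂ) p * q) - Complex.normSq (p - q)
      = (1 - Complex.normSq p) * (1 - Complex.normSq q) := by
  simp [Complex.normSq_apply, Complex.sub_re, Complex.sub_im, Complex.mul_re, Complex.mul_im,
    Complex.conj_re, Complex.conj_im, Complex.one_re, Complex.one_im]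
  ring

section SPcore
lemma SP_alg {b w z : ℂ} (hb : Complex.abs b ≤ 1) (hw : Complex.abs w ≤ 1)
    (ht : Complex.abs z ≤ 1)
    (h : Complex.abs (b - w) ≤ Complex.abs z * Complex.abs (1 - (starRingEnd ℂ) b * w)) :
    Complex.abs b - Complex.abs z ≤ Complex.abs w * (1 - Complex.abs b * Complex.abs z) ∧
      Complex.abs w * (1 + Complex.abs b * Complex.abs z) ≤ Complex.abs b + Complex.abs z := by
  set a := Complex.abs b with ha
  set u := Complex.abs w with hu
  set t := Complex.abs z with htd
  have ha0 : 0 ≤ a := Complex.abs.nonneg b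
  have hu0 : 0 ≤ u := Complex.abs.nonneg w
  have ht0 : 0 ≤ t := Complex.abs.nonneg z
  set x : ℝ := ((starRingEnd ℂ) b * w).re with hx
  have hxle : |x| ≤ a * u := by
    calc |x| ≤ Complex.abs ((starRingEnd ℂ) b * w) := Complex.abs_re_le_abs _
      _ = a * u := by rw [map_mul, Complex.abs_conj]
  have e1 : Complex.normSq (b - w) = a^2 - 2*x + u^2 := by
    rw [ha, hu, Complex.sq_abs, Complex.sq_abs, hx]
    simp [Complex.normSq_apply, Complex.sub_re, Complex.sub_im, Complex.mul_re, Complex.mul_im,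
      Complex.conj_re, Complex.conj_im]
    ring
  have e2 : Complex.normSq (1 - (starRingEnd ℂ) b * w) = 1 - 2*x + a^2 * u^2 := by
    rw [ha, hu, Complex.sq_abs, Complex.sq_abs, hx]
    simp [Complex.normSq_apply, Complex.sub_re, Complex.sub_im, Complex.mul_re, Complex.mul_im,
      Complex.conj_re, Complex.conj_im, Complex.one_re, Complex.one_im]
    ring
  have hsq : Complex.normSq (b - w) ≤ t^2 * Complex.normSq (1 - (starRingEnd ℂ) b * w) := by
    have h2 : (Complex.abs (b - w))^2 ≤ (t * Complex.abs (1 - (starRingEnd ℂ) b * w))^2 := by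
      apply sq_le_sq' _ h
      have := Complex.abs.nonneg (b - w)
      nlinarith [mul_nonneg ht0 (Complex.abs.nonneg (1 - (starRingEnd ℂ) b * w))]
    rw [Complex.sq_abs] at h2
    calc Complex.normSq (b - w) ≤ (t * Complex.abs (1 - (starRingEnd ℂ) b * w))^2 := h2
      _ = t^2 * Complex.normSq (1 - (starRingEnd ℂ) b * w) := by
          rw [mul_pow, Complex.sq_abs, Complex.sq_abs]
  rw [e1, e2] at hsq
  have key : (a - u)^2 ≤ t^2 * (1 - a*u)^2 := by
    have h1 : x ≤ a * u := (abs_le.mp hxle).2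
    nlinarith [mul_nonneg (sub_nonneg.2 h1) (sub_nonneg.2 (by nlinarith : t^2 ≤ 1))]
  have hau : 0 ≤ 1 - a * u := by nlinarith
  have h3 : 0 ≤ t * (1 - a*u) := mul_nonneg ht0 hau
  have hmain := abs_le_of_sq_le_sq' (by nlinarith : (a-u)^2 ≤ (t*(1-a*u))^2) h3
  constructor
  · nlinarith [hmain.2]
  · nlinarith [hmain.1]

-- Schwarz–Pick at 0
lemma SP_core {g : ℂ → ℂ} (hd : DifferentiableOn ℂ g unitDisk)
    (hb : ∀ w ∈ unitDisk, Complex.abs (g w) ≤ 1) {z : ℂ} (hz : z ∈ unitDisk) :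
    Complex.abs (g 0 - g z) ≤ Complex.abs z * Complex.abs (1 - (starRingEnd ℂ) (g 0) * g z) := by
  by_cases hcase : ∀ w ∈ unitDisk, Complex.abs (g w) < 1
  · set b := g 0 with hbdef
    have hb0 : Complex.abs b < 1 := hcase 0 zero_mem_unitDisk
    have hden : ∀ w ∈ unitDisk, (1 - (starRingEnd ℂ) b * g w) ≠ 0 := by
      intro w hw h0
      have h1 : (1 : ℂ) = (starRingEnd ℂ) b * g w := by linear_combination h0
      have : (1 : ℝ) = Complex.abs b * Complex.abs (g w) := by
        calc (1:ℝ) = Complex.abs ((starRingEnd ℂ) b * g w) := by rw [← h1]; simp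
        _ = Complex.abs b * Complex.abs (g w) := by simp
      nlinarith [hcase w hw, Complex.abs.nonneg (g w), Complex.abs.nonneg b]
    set k : ℂ → ℂ := fun w => (b - g w) / (1 - (starRingEnd ℂ) b * g w) with hkdef
    have hkd : DifferentiableOn ℂ k unitDisk := by
      apply DifferentiableOn.div
      · exact (differentiableOn_const b).sub hd
      · exact (differentiableOn_const 1).sub ((differentiableOn_const _).mul hd)
      · exact hden
    have habs : ∀ w ∈ unitDisk, Complex.abs (b - g w) < Complex.abs (1 - (starRingEnd ℂ) b * g w) := by
      intro w hw
      have h1 : Complex.normSq (b - g w) < Complex.normSq (1 - (starRingEnd ℂ) b * g w) := by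
        have := normSq_identity b (g w)
        have hb2 : Complex.normSq b < 1 := by
          rw [← Complex.sq_abs]; nlinarith [Complex.abs.nonneg b]
        have hg2 : Complex.normSq (g w) < 1 := by
          rw [← Complex.sq_abs]; nlinarith [Complex.abs.nonneg (g w), hcase w hw]
        nlinarith
      have := Real.sqrt_lt_sqrt (Complex.normSq_nonneg _) h1
      simpa [Complex.abs_apply] using this
    have hkm : MapsTo k unitDisk unitDisk := by
      intro w hw
      rw [mem_unitDisk]
      rw [hkdef]
      simp only [map_div₀]
      rw [div_lt_one (Complex.abs.pos (hden w hw))]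
      exact habs w hw
    have hk0 : k 0 = 0 := by simp [hkdef, hbdef]
    have hsch : Complex.abs (k z) ≤ Complex.abs z := by
      rcases eq_or_ne z 0 with rfl | hz0
      · simp [hk0]
      · have hmaps : MapsTo k (ball (0:ℂ) 1) (ball (k 0) 1) := by
          rw [hk0]; exact hkm
        have := Complex.norm_dslope_le_div_of_mapsTo_ball hkd (hmaps.mono_right ball_subset_closedBall) hz
        rw [dslope_of_ne _ hz0, slope_def_field, hk0] at this
        have h2 : ‖(k z - 0) / (z - 0)‖ ≤ 1 := by simpa using this
        rw [sub_zero, sub_zero, norm_div] at h2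
        have hzpos : (0:ℝ) < ‖z‖ := by simpa using hz0
        calc Complex.abs (k z) = ‖k z‖ := (Complex.norm_eq_abs _).symm
          _ ≤ ‖z‖ := by rw [div_le_one hzpos] at h2; exact h2
          _ = Complex.abs z := Complex.norm_eq_abs _
    have hfac : b - g z = k z * (1 - (starRingEnd ℂ) b * g z) := by
      rw [hkdef]
      exact (div_mul_cancel₀ _ (hden z hz)).symm
    calc Complex.abs (b - g z)
        = Complex.abs (k z) * Complex.abs (1 - (starRingEnd ℂ) b * g z) := by
          rw [hfac, map_mul]
      _ ≤ Complex.abs z * Complex.abs (1 - (starRingEnd ℂ) b * g z) := by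
          apply mul_le_mul_of_nonneg_right hsch (Complex.abs.nonneg _)
  · push_neg at hcase
    obtain ⟨w0, hw0, hge⟩ := hcase
    have heq : EqOn g (Function.const ℂ (g w0)) unitDisk := by
      apply Complex.eqOn_of_isPreconnected_of_isMaxOn_norm
        (convex_ball (0:ℂ) 1).isPreconnected isOpen_ball hd hw0
      intro w hw
      simp only [Function.comp_apply, Complex.norm_eq_abs]
      calc Complex.abs (g w) ≤ 1 := hb w hw
        _ ≤ Complex.abs (g w0) := hge
    have h1 : g 0 = g w0 := heq zero_mem_unitDisk
    have h2 : g z = g w0 := heq hz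
    rw [h1, h2]
    simp only [sub_self, map_zero]
    positivity

lemma selfmap_bound {h : ℂ → ℂ} (hd : DifferentiableOn ℂ h unitDisk)
    (hm : MapsTo h unitDisk unitDisk) (h0 : h 0 = 0) {z : ℂ} (hz : z ∈ unitDisk) :
    Complex.abs (deriv h 0) ≤ 1 ∧ Complex.abs (h z) ≤ Complex.abs z ∧
      Complex.abs z * (Complex.abs (deriv h 0) - Complex.abs z)
        ≤ Complex.abs (h z) * (1 - Complex.abs (deriv h 0) * Complex.abs z) ∧
      Complex.abs (h z) * (1 + Complex.abs (deriv h 0) * Complex.abs z)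
        ≤ Complex.abs z * (Complex.abs (deriv h 0) + Complex.abs z) := by
  have hnhds : unitDisk ∈ 𝓝 (0 : ℂ) := isOpen_ball.mem_nhds zero_mem_unitDisk
  set g : ℂ → ℂ := dslope h 0 with hgdef
  have hgd : DifferentiableOn ℂ g unitDisk := (Complex.differentiableOn_dslope hnhds).mpr hd
  have hmaps : MapsTo h (ball (0:ℂ) 1) (ball (h 0) 1) := by rw [h0]; exact hm
  have hgb : ∀ w ∈ unitDisk, Complex.abs (g w) ≤ 1 := by
    intro w hw
    have := Complex.norm_dslope_le_div_of_mapsTo_ball hd (hmaps.mono_right ball_subset_closedBall) hw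
    simpa [Complex.norm_eq_abs] using this
  have hg0 : g 0 = deriv h 0 := dslope_same h 0
  have hA : Complex.abs (h z) = Complex.abs z * Complex.abs (g z) := by
    rcases eq_or_ne z 0 with rfl | hz0
    · simp [h0]
    · have : g z = (h z - h 0) / (z - 0) := by
        rw [hgdef, dslope_of_ne _ hz0, slope_def_field]
      rw [h0, sub_zero, sub_zero] at this
      rw [this, map_div₀]
      rw [mul_div_cancel₀]
      exact Complex.abs.ne_zero hz0
  have hsp := SP_core hgd hgb hz
  have halg := SP_alg (hgb 0 zero_mem_unitDisk) (hgb z hz) (mem_unitDisk.mp hz).le hsp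
  set a := Complex.abs (g 0)
  set u := Complex.abs (g z)
  set t := Complex.abs z
  have ht0 : (0:ℝ) ≤ t := Complex.abs.nonneg z
  have hu0 : (0:ℝ) ≤ u := Complex.abs.nonneg _
  have hu1 : u ≤ 1 := hgb z hz
  have ha1 : a ≤ 1 := hgb 0 zero_mem_unitDisk
  rw [← hg0]
  refine ⟨ha1, ?_, ?_, ?_⟩
  · rw [hA]; nlinarith
  · rw [hA]; nlinarith [mul_le_mul_of_nonneg_left halg.1 ht0]
  · rw [hA]; nlinarith [mul_le_mul_of_nonneg_left halg.2 ht0]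

end SPcore

/-- If `(f n)` are nonconstant holomorphic self-maps of the unit disk
fixing the origin, whose forward iterates converge locally uniformly to a holomorphic
self-map `Flim`, then `Flim` is nonconstant iff `∑ (1 - |f n′(0)|) < ∞`. -/
theorem stmt_2
    (f F : ℕ → ℂ → ℂ) (Flim : ℂ → ℂ)
    (hf : ∀ n : ℕ, IsHolSelfMap (f (n + 1)))
    (hfnc : ∀ n : ℕ, ∃ z ∈ unitDisk, ∃ w ∈ unitDisk, f (n + 1) z ≠ f (n + 1) w)
    (hfix : ∀ n : ℕ, f (n + 1) 0 = 0)
    (hF0 : ∀ z, F 0 z = z)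
    (hFrec : ∀ n z, F (n + 1) z = f (n + 1) (F n z))
    (hFlim : IsHolSelfMap Flim)
    (hconv : TendstoLocallyUniformlyOn F Flim atTop unitDisk) :
    (∃ z ∈ unitDisk, ∃ w ∈ unitDisk, Flim z ≠ Flim w) ↔
      Summable (fun n : ℕ => 1 - ‖deriv (f (n + 1)) 0‖) := by
  set b : ℕ → ℝ := fun n => 1 - Complex.abs (deriv (f (n + 1)) 0) with hbdef
  have hb_nonneg : ∀ n, 0 ≤ b n := by
    intro n
    have := (selfmap_bound (hf n).1 (hf n).2 (hfix n) zero_mem_unitDisk).1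
    simp only [hbdef]; linarith
  have hFd : ∀ n, DifferentiableOn ℂ (F n) unitDisk ∧ MapsTo (F n) unitDisk unitDisk := by
    intro n
    induction n with
    | zero =>
      refine ⟨DifferentiableOn.congr differentiableOn_id (fun z _ => hF0 z), ?_⟩
      intro z hz; rw [hF0]; exact hz
    | succ n ih =>
      refine ⟨DifferentiableOn.congr (((hf n).1).comp ih.1 ih.2) (fun z _ => hFrec n z), ?_⟩
      intro z hz; rw [hFrec]; exact (hf n).2 (ih.2 hz)
  have hF0z : ∀ n, F n 0 = 0 := by
    intro n
    induction n with
    | zero => exact hF0 0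
    | succ n ih => rw [hFrec, ih, hfix]
  have hFlim0 : Flim 0 = 0 := by
    have h1 : Tendsto (fun n => F n 0) atTop (𝓝 (Flim 0)) := hconv.tendsto_at zero_mem_unitDisk
    have h2 : Tendsto (fun n => F n 0) atTop (𝓝 (0:ℂ)) := by
      simp only [hF0z]; exact tendsto_const_nhds
    exact tendsto_nhds_unique h1 h2
  constructor
  · intro hne
    by_contra hns
    obtain ⟨z, hz, w, hw, hzw⟩ := hne
    have hT : Tendsto (fun n => ∑ k ∈ Finset.range n, b k) atTop atTop :=
      (not_summable_iff_tendsto_nat_atTop_of_nonneg hb_nonneg).mp hns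
    have hzero : ∀ v ∈ unitDisk, Flim v = 0 := by
      intro v hv
      set r : ℝ := Complex.abs v with hrdef
      have hr1 : r < 1 := mem_unitDisk.mp hv
      have hr0 : 0 ≤ r := Complex.abs.nonneg v
      set c : ℝ := (1 - r) / 2 with hcdef
      have hc : 0 < c := by simp only [hcdef]; linarith
      have claim : ∀ n, Complex.abs (F n v)
          ≤ r * Real.exp (-(c * ∑ k ∈ Finset.range n, b k)) := by
        intro n
        induction n with
        | zero => simp [hF0, hrdef]
        | succ n ih =>
          set t := Complex.abs (F n v) with htdef
          set a := Complex.abs (deriv (f (n+1)) 0) with hadef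
          have hFnv : F n v ∈ unitDisk := (hFd n).2 hv
          have hbd := selfmap_bound (hf n).1 (hf n).2 (hfix n) hFnv
          have ha1 : a ≤ 1 := hbd.1
          have ha0 : 0 ≤ a := Complex.abs.nonneg _
          have ht0 : 0 ≤ t := Complex.abs.nonneg _
          have htr : t ≤ r := by
            have hexp : Real.exp (-(c * ∑ k ∈ Finset.range n, b k)) ≤ 1 := by
              rw [Real.exp_le_one_iff]
              have : 0 ≤ ∑ k ∈ Finset.range n, b k :=
                Finset.sum_nonneg (fun k _ => hb_nonneg k)
              nlinarith
            calc t ≤ r * Real.exp (-(c * ∑ k ∈ Finset.range n, b k)) := ih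
              _ ≤ r * 1 := by nlinarith [Real.exp_pos (-(c * ∑ k ∈ Finset.range n, b k))]
              _ = r := mul_one r
          have hA : Complex.abs (F (n+1) v) = Complex.abs (f (n+1) (F n v)) := by rw [hFrec]
          set A := Complex.abs (f (n+1) (F n v)) with hAdef
          have hA0 : 0 ≤ A := Complex.abs.nonneg _
          have h4 : A * (1 + a * t) ≤ t * (a + t) := hbd.2.2.2
          -- A ≤ t * (1 - c * b n)
          have hbn : b (n) = 1 - a := rfl
          have ht1 : t ≤ 1 := htr.trans hr1.le
          have haux : 0 ≤ (1 - t) - (1 - r) / 2 * (1 + a * t) := by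
            nlinarith [mul_nonneg (sub_nonneg.2 htr) (by nlinarith : (0:ℝ) ≤ 1 + a * t),
              mul_nonneg (sub_nonneg.2 ht1) (mul_nonneg ht0 (sub_nonneg.2 ha1)),
              sq_nonneg (1 - t)]
          have h5 : t * (a + t) ≤ (t * (1 - c * b n)) * (1 + a * t) := by
            rw [hbn, hcdef]
            nlinarith [mul_nonneg (mul_nonneg ht0 (sub_nonneg.2 ha1)) haux]
          have h6 : A ≤ t * (1 - c * b n) := by
            have hpos : 0 < 1 + a * t := by nlinarith
            have := h4.trans h5
            exact le_of_mul_le_mul_right this hpos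
          have h7 : 1 - c * b n ≤ Real.exp (-(c * b n)) := by
            have := Real.add_one_le_exp (-(c * b n))
            linarith
          calc Complex.abs (F (n+1) v) = A := hA
            _ ≤ t * (1 - c * b n) := h6
            _ ≤ t * Real.exp (-(c * b n)) := by
                apply mul_le_mul_of_nonneg_left h7 ht0
            _ ≤ (r * Real.exp (-(c * ∑ k ∈ Finset.range n, b k))) * Real.exp (-(c * b n)) := by
                apply mul_le_mul_of_nonneg_right ih (Real.exp_pos _).le
            _ = r * Real.exp (-(c * ∑ k ∈ Finset.range (n+1), b k)) := by
                rw [mul_assoc, ← Real.exp_add, Finset.sum_range_succ]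
                congr 2
                ring
      have hlim0 : Tendsto (fun n => r * Real.exp (-(c * ∑ k ∈ Finset.range n, b k)))
          atTop (𝓝 0) := by
        have h1 : Tendsto (fun n => c * ∑ k ∈ Finset.range n, b k) atTop atTop :=
          hT.const_mul_atTop hc
        have h2 : Tendsto (fun n => -(c * ∑ k ∈ Finset.range n, b k)) atTop atBot :=
          tendsto_neg_atBot_iff.mpr h1
        have h3 : Tendsto (fun n => Real.exp (-(c * ∑ k ∈ Finset.range n, b k)))
            atTop (𝓝 0) := Real.tendsto_exp_atBot.comp h2
        have := h3.const_mul r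
        simpa using this
      have hFv0 : Tendsto (fun n => F n v) atTop (𝓝 (0:ℂ)) := by
        apply squeeze_zero_norm _ hlim0
        intro n
        rw [Complex.norm_eq_abs]
        exact claim n
      exact tendsto_nhds_unique (hconv.tendsto_at hv) hFv0
    exact hzw (by rw [hzero z hz, hzero w hw])
  · intro hs
    have hQ : ∀ n, ¬ ∃ c : ℂ, ∀ z ∈ unitDisk, F n z = c := by
      intro n
      induction n with
      | zero =>
        rintro ⟨c, hc⟩
        have h1 := hc 0 zero_mem_unitDisk
        have h2 := hc (1/2) (by rw [mem_unitDisk]; norm_num)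
        rw [hF0] at h1 h2
        rw [← h1] at h2
        norm_num at h2
      | succ n ih =>
        rintro ⟨c, hc⟩
        rcases ((hFd n).1.analyticOnNhd isOpen_ball).is_constant_or_isOpen
          (convex_ball (0:ℂ) 1).isPreconnected with ⟨w, hw⟩ | hopen
        · exact ih ⟨w, hw⟩
        · have himg : IsOpen (F n '' unitDisk) := hopen _ subset_rfl isOpen_ball
          obtain ⟨η, hη, hball⟩ := Metric.isOpen_iff.mp himg 0 ⟨0, zero_mem_unitDisk, hF0z n⟩
          have heq : f (n+1) =ᶠ[𝓝 (0:ℂ)] fun _ => c := by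
            filter_upwards [ball_mem_nhds (0:ℂ) hη] with w hw'
            obtain ⟨z, hz, rfl⟩ := hball hw'
            rw [← hFrec]
            exact hc z hz
          have heqon := ((hf n).1.analyticOnNhd isOpen_ball).eqOn_of_preconnected_of_eventuallyEq
            analyticOnNhd_const (convex_ball (0:ℂ) 1).isPreconnected zero_mem_unitDisk heq
          obtain ⟨p, hp, q, hq, hpq⟩ := hfnc n
          exact hpq (by rw [heqon hp, heqon hq])
    -- choose N with small tail
    have hTS : Tendsto (fun n => ∑ k ∈ Finset.range n, b k) atTop (𝓝 (∑' k, b k)) :=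
      hs.hasSum.tendsto_sum_nat
    have hev : ∀ᶠ n in atTop, (∑' k, b k) - 1/8 < ∑ k ∈ Finset.range n, b k :=
      hTS.eventually (eventually_gt_nhds (by norm_num))
    obtain ⟨N, hN⟩ := hev.exists
    have htail : ∀ m, ∑ k ∈ Finset.range m, b (N + k) < 1/8 := by
      intro m
      have h1 : ∑ k ∈ Finset.range (N + m), b k ≤ ∑' k, b k :=
        Summable.sum_le_tsum _ (fun i _ => hb_nonneg i) hs
      have h2 : ∑ k ∈ Finset.range (N + m), b k
          = ∑ k ∈ Finset.range N, b k + ∑ k ∈ Finset.range m, b (N + k) :=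
        Finset.sum_range_add b N m
      linarith
    -- pick z0 with 0 < |F N z0| ≤ 1/4
    have himg : IsOpen (F N '' unitDisk) := by
      rcases ((hFd N).1.analyticOnNhd isOpen_ball).is_constant_or_isOpen
        (convex_ball (0:ℂ) 1).isPreconnected with ⟨w, hw⟩ | hopen
      · exact absurd ⟨w, hw⟩ (hQ N)
      · exact hopen _ subset_rfl isOpen_ball
    obtain ⟨η, hη, hball⟩ := Metric.isOpen_iff.mp himg 0 ⟨0, zero_mem_unitDisk, hF0z N⟩
    set r : ℝ := min η (1/2) / 2 with hrdef
    have hr0 : 0 < r := by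
      simp only [hrdef]
      positivity
    have hr14 : r ≤ 1/4 := by
      simp only [hrdef]
      have := min_le_right η (1/2:ℝ)
      linarith
    have hw1 : (r : ℂ) ∈ ball (0:ℂ) η := by
      rw [mem_ball, dist_zero_right, Complex.norm_real, Real.norm_eq_abs, abs_of_pos hr0]
      have := min_le_left η (1/2:ℝ)
      simp only [hrdef]
      linarith [lt_min_iff.mp (show (0:ℝ) < min η (1/2) by positivity)]
    obtain ⟨z0, hz0mem, hFz0⟩ := hball hw1
    have hFNz0 : Complex.abs (F N z0) = r := by
      rw [hFz0, Complex.abs_ofReal, abs_of_pos hr0]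
    -- main induction
    have claim : ∀ m, Complex.abs (F (N + m) z0) ≤ r ∧
        r * (1 - 4 * ∑ k ∈ Finset.range m, b (N + k)) ≤ Complex.abs (F (N + m) z0) := by
      intro m
      induction m with
      | zero => simp [hFNz0]
      | succ m ih =>
        have hmem : F (N + m) z0 ∈ unitDisk := (hFd (N + m)).2 hz0mem
        have hbd := selfmap_bound (hf (N + m)).1 (hf (N + m)).2 (hfix (N + m)) hmem
        set t := Complex.abs (F (N + m) z0) with htdef
        set a := Complex.abs (deriv (f (N + m + 1)) 0) with hadef
        set A := Complex.abs (f (N + m + 1) (F (N + m) z0)) with hAdef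
        have hrecc : Complex.abs (F (N + (m + 1)) z0) = A := by
          rw [show N + (m + 1) = (N + m) + 1 from rfl, hFrec]
        have ha1 : a ≤ 1 := hbd.1
        have ha0 : 0 ≤ a := Complex.abs.nonneg _
        have ht0 : 0 ≤ t := Complex.abs.nonneg _
        have htr : t ≤ r := ih.1
        have hAt : A ≤ t := hbd.2.1
        have hbm : b (N + m) = 1 - a := rfl
        have hbnn : 0 ≤ b (N + m) := hb_nonneg _
        have hbsmall : b (N + m) < 1/8 := by
          have h1 : b (N + m) ≤ ∑ k ∈ Finset.range (m + 1), b (N + k) := by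
            have := Finset.single_le_sum (f := fun k => b (N + k))
              (fun k _ => hb_nonneg (N + k)) (Finset.self_mem_range_succ m)
            exact this
          exact lt_of_le_of_lt h1 (htail (m + 1))
        have hsnn : 0 ≤ ∑ k ∈ Finset.range m, b (N + k) :=
          Finset.sum_nonneg fun k _ => hb_nonneg _
        have hssmall : ∑ k ∈ Finset.range m, b (N + k) < 1/8 := htail m
        constructor
        · rw [hrecc]; exact hAt.trans htr
        · rw [hrecc]
          -- step lower bound : t * (1 - 4 * b (N+m)) ≤ A
          have hat : a * t ≤ t := mul_le_of_le_one_left ht0 ha1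
          have hpos : 0 < 1 - a * t := by linarith
          have hstep : t * (1 - 4 * b (N + m)) ≤ A := by
            have h3 : 0 ≤ 3 - t - 4 * a * t := by
              nlinarith [mul_nonneg ht0 (sub_nonneg.2 ha1)]
            have h4 : t * (1 - 4 * b (N + m)) * (1 - a * t) ≤ t * (a - t) := by
              rw [hbm]
              nlinarith [mul_nonneg (mul_nonneg ht0 (sub_nonneg.2 ha1)) h3,
                mul_nonneg ht0 (mul_nonneg (sub_nonneg.2 ha1) h3)]
            have h5 : t * (1 - 4 * b (N + m)) * (1 - a * t) ≤ A * (1 - a * t) :=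
              h4.trans hbd.2.2.1
            exact le_of_mul_le_mul_right h5 hpos
          have h6 : r * (1 - 4 * ∑ k ∈ Finset.range (m + 1), b (N + k))
              ≤ t * (1 - 4 * b (N + m)) := by
            rw [Finset.sum_range_succ]
            nlinarith [mul_nonneg (sub_nonneg.2 ih.2) (by linarith : (0:ℝ) ≤ 1 - 4 * b (N + m)),
              mul_nonneg hr0.le (mul_nonneg hsnn hbnn)]
          exact h6.trans hstep
    have hhalf : ∀ m, r / 2 ≤ Complex.abs (F (N + m) z0) := by
      intro m
      have := (claim m).2
      have h1 := htail m
      have h2 : 0 ≤ ∑ k ∈ Finset.range m, b (N + k) :=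
        Finset.sum_nonneg fun k _ => hb_nonneg _
      nlinarith
    have htend : Tendsto (fun n => Complex.abs (F n z0)) atTop
        (𝓝 (Complex.abs (Flim z0))) :=
      (Complex.continuous_abs.tendsto _).comp (hconv.tendsto_at hz0mem)
    have hge : r / 2 ≤ Complex.abs (Flim z0) := by
      apply ge_of_tendsto htend
      rw [eventually_atTop]
      exact ⟨N, fun n hn => by
        obtain ⟨m, rfl⟩ := Nat.exists_eq_add_of_le hn
        exact hhalf m⟩
    refine ⟨z0, hz0mem, 0, zero_mem_unitDisk, ?_⟩
    rw [hFlim0]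
    intro hcontra
    rw [hcontra] at hge
    simp only [map_zero] at hge
    linarith
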